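/- Let n ≥ 2 and let f : [0,∞) → ℝ be continuous with f(0) = 0, twice continuously differentiable on (0,∞) with lim_{r→0⁺} f'(r) = 0, and satisfy f''(r) = (1 + f'(r)²)(1 - (n-1)f'(r)/r) for all r > 0. Then for every ε > 0 there exists r₀ = r₀(ε) > 0 such that f'(r) > (1-ε)·r/(n-1) for all r ≥ r₀. -/

import Mathlib

open Real Filter Set

/-- If `g` has derivative `G ≥ c` on `[a,b]`, then `g b ≥ g a + c (b - a)`. -/
lemma bowl_aux_grow (g G : ℝ → ℝ) (a b c : ℝ) (hab : a ≤ b)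
    (hg : ∀ r ∈ Set.Icc a b, HasDerivAt g (G r) r)
    (hG : ∀ r ∈ Set.Icc a b, c ≤ G r) :
    g a + c * (b - a) ≤ g b := by
  have hψ : ∀ r ∈ Set.Icc a b, HasDerivAt (fun r => g r - c * r) (G r - c) r := by
    intro r hr
    exact ((hg r hr).sub ((hasDerivAt_id r).const_mul c)).congr_deriv (by ring)
  have H : MonotoneOn (fun r => g r - c * r) (Set.Icc a b) := by
    apply monotoneOn_of_deriv_nonneg (convex_Icc a b)
    · exact fun r hr => (hψ r hr).continuousAt.continuousWithinAt
    · intro r hr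
      rw [interior_Icc] at hr
      exact (hψ r (Ioo_subset_Icc_self hr)).differentiableAt.differentiableWithinAt
    · intro r hr
      rw [interior_Icc] at hr
      rw [(hψ r (Ioo_subset_Icc_self hr)).deriv]
      have := hG r (Ioo_subset_Icc_self hr)
      linarith
  have := H (Set.left_mem_Icc.2 hab) (Set.right_mem_Icc.2 hab) hab
  simp only at this
  linarith

set_option maxHeartbeats 1000000 in
theorem bowl_profile_gradient_asymptotic (n : ℕ) (hn : 2 ≤ n) (f : ℝ → ℝ)
    (hf0 : f 0 = 0)
    (hcont : ContinuousOn f (Set.Ici 0))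
    (hC2 : ContDiffOn ℝ 2 f (Set.Ioi 0))
    (hd0 : Tendsto (deriv f) (nhdsWithin 0 (Set.Ioi 0)) (nhds 0))
    (hODE : ∀ r : ℝ, 0 < r → deriv (deriv f) r =
      (1 + (deriv f r) ^ 2) * (1 - ((n : ℝ) - 1) * deriv f r / r)) :
    ∀ ε : ℝ, 0 < ε → ∃ r₀ : ℝ, 0 < r₀ ∧
      ∀ r : ℝ, r₀ ≤ r → (1 - ε) * r / ((n : ℝ) - 1) < deriv f r := by
  set g := deriv f with hg_def
  set G : ℝ → ℝ := fun r => (1 + g r ^ 2) * (1 - ((n : ℝ) - 1) * g r / r) with hG_def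
  have hn1 : (1 : ℝ) ≤ (n : ℝ) - 1 := by
    have : (2 : ℝ) ≤ (n : ℝ) := by exact_mod_cast hn
    linarith
  have hn1' : (0 : ℝ) < (n : ℝ) - 1 := by linarith
  -- differentiability of g on (0,∞)
  have hgdiff : DifferentiableOn ℝ g (Set.Ioi 0) := by
    have h1 : ContDiffOn ℝ 1 (deriv f) (Set.Ioi 0) :=
      hC2.deriv_of_isOpen isOpen_Ioi (by norm_num)
    exact h1.differentiableOn (by norm_num)
  have hgd : ∀ r : ℝ, 0 < r → HasDerivAt g (G r) r := by
    intro r hr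
    have hd : DifferentiableAt ℝ g r :=
      hgdiff.differentiableAt (isOpen_Ioi.mem_nhds hr)
    have := hd.hasDerivAt
    rwa [hODE r hr] at this
  -- main claim for ε ∈ (0,1)
  have main : ∀ ε : ℝ, 0 < ε → ε < 1 → ∃ r₀ : ℝ, 0 < r₀ ∧
      ∀ r : ℝ, r₀ ≤ r → ((1 - ε) / ((n : ℝ) - 1)) * r < g r := by
    intro ε hε hε1
    set m : ℝ := (1 - ε) / ((n : ℝ) - 1) with hm_def
    have hm_nonneg : 0 ≤ m := div_nonneg (by linarith) (le_of_lt hn1')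
    have hm_lt_one : m < 1 := by
      rw [hm_def, div_lt_one hn1']; linarith
    have hmn : ((n : ℝ) - 1) * m = 1 - ε := by
      rw [hm_def]; field_simp
    -- derivative lower bounds when below the line
    have hGlow : ∀ r : ℝ, 0 < r → g r ≤ m * r → ε * (1 + g r ^ 2) ≤ G r := by
      intro r hr hle
      have h2 : ((n : ℝ) - 1) * g r / r ≤ 1 - ε := by
        rw [div_le_iff₀ hr]
        calc ((n : ℝ) - 1) * g r ≤ ((n : ℝ) - 1) * (m * r) :=
              mul_le_mul_of_nonneg_left hle (le_of_lt hn1')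
          _ = (((n : ℝ) - 1) * m) * r := by ring
          _ = (1 - ε) * r := by rw [hmn]
      have h2' : ε ≤ 1 - ((n : ℝ) - 1) * g r / r := by linarith
      have h3 : (0 : ℝ) < 1 + g r ^ 2 := by positivity
      calc ε * (1 + g r ^ 2) = (1 + g r ^ 2) * ε := by ring
        _ ≤ (1 + g r ^ 2) * (1 - ((n : ℝ) - 1) * g r / r) :=
            mul_le_mul_of_nonneg_left h2' (le_of_lt h3)
        _ = G r := rfl
    have hGε : ∀ r : ℝ, 0 < r → g r ≤ m * r → ε ≤ G r := by
      intro r hr hle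
      have h1 := hGlow r hr hle
      have h2 : ε ≤ ε * (1 + g r ^ 2) := by nlinarith [sq_nonneg (g r)]
      linarith
    -- Step A: beyond every R there is a point above the line
    have stepA : ∀ R : ℝ, 0 < R → ∃ r₁ : ℝ, R ≤ r₁ ∧ m * r₁ < g r₁ := by
      intro R hR
      by_contra hcon
      push_neg at hcon
      have below : ∀ r : ℝ, R ≤ r → g r ≤ m * r := hcon
      have grow1 : ∀ a b : ℝ, R ≤ a → a ≤ b → g a + ε * (b - a) ≤ g b := by
        intro a b ha hab
        apply bowl_aux_grow g G a b ε hab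
        · intro r hr; exact hgd r (lt_of_lt_of_le hR (ha.trans hr.1))
        · intro r hr
          have hrpos : 0 < r := lt_of_lt_of_le hR (ha.trans hr.1)
          exact hGε r hrpos (below r (ha.trans hr.1))
      set K : ℝ := (m + 2) / ε with hK_def
      have hK1 : 1 ≤ K := by
        rw [hK_def, le_div_iff₀ hε]; nlinarith
      have hKsq : m + 1 ≤ ε * K ^ 2 := by
        have e : ε * K ^ 2 = (m + 2) ^ 2 / ε := by rw [hK_def]; field_simp
        rw [e, le_div_iff₀ hε]
        nlinarith
      set b : ℝ := R + (K + 1 + |g R| - g R) / ε with hb_def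
      have habs1 := le_abs_self (g R)
      have habs2 := abs_nonneg (g R)
      have hnum : 0 ≤ K + 1 + |g R| - g R := by linarith
      have hRb : R ≤ b := by
        rw [hb_def]
        have : 0 ≤ (K + 1 + |g R| - g R) / ε := by positivity
        linarith
      have hεb : ε * (b - R) = K + 1 + |g R| - g R := by
        rw [hb_def]; field_simp; ring
      have hgb : K ≤ g b := by
        have h := grow1 R b le_rfl hRb
        rw [hεb] at h
        linarith
      have hgK : ∀ r : ℝ, b ≤ r → K ≤ g r := by
        intro r hr
        have h := grow1 b r hRb hr
        have h2 : 0 ≤ ε * (r - b) := mul_nonneg (le_of_lt hε) (by linarith)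
        linarith
      -- strong growth beyond b
      have grow2 : ∀ cc : ℝ, b ≤ cc → g b + (m + 1) * (cc - b) ≤ g cc := by
        intro cc hcc
        apply bowl_aux_grow g G b cc (m + 1) hcc
        · intro r hr; exact hgd r (lt_of_lt_of_le hR (hRb.trans hr.1))
        · intro r hr
          have hrpos : 0 < r := lt_of_lt_of_le hR (hRb.trans hr.1)
          have h1 := hGlow r hrpos (below r (hRb.trans hr.1))
          have h2 := hgK r hr.1
          have h3 : K ^ 2 ≤ g r ^ 2 := by nlinarith
          have h4 : ε * K ^ 2 ≤ ε * g r ^ 2 := mul_le_mul_of_nonneg_left h3 (le_of_lt hε)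
          have h5 : ε * (1 + g r ^ 2) = ε + ε * g r ^ 2 := by ring
          linarith
      set d : ℝ := m * b - g b with hd_def
      have hd0' : 0 ≤ d := by
        have := below b hRb; rw [hd_def]; linarith
      set c : ℝ := b + d + 1 with hc_def
      have hbc : b ≤ c := by rw [hc_def]; linarith
      have h1 := grow2 c hbc
      have h2 := below c (hRb.trans hbc)
      have e1 : (m + 1) * (c - b) = m * (d + 1) + (d + 1) := by rw [hc_def]; ring
      have e2 : m * c = m * b + m * (d + 1) := by rw [hc_def]; ring
      rw [e1] at h1
      rw [e2] at h2
      rw [hd_def] at h1 h2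
      linarith
    -- Step B: choose R₀ such that the crossing derivative beats the slope
    set R₀ : ℝ := ((n : ℝ) - 1) / (ε * (1 - ε)) + 1 with hR₀_def
    have hR₀pos : 0 < R₀ := by
      have h := div_pos hn1' (mul_pos hε (by linarith : (0:ℝ) < 1 - ε))
      rw [hR₀_def]; linarith
    have hmR₀ : m * R₀ = 1 / ε + m := by
      have key : (1 - ε) / ((n : ℝ) - 1) * (((n : ℝ) - 1) / (ε * (1 - ε))) = 1 / ε := by
        rw [div_mul_div_comm, div_eq_div_iff
          (ne_of_gt (mul_pos hn1' (mul_pos hε (by linarith : (0:ℝ) < 1 - ε))))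
          (ne_of_gt hε)]
        ring
      calc m * R₀ = (1 - ε) / ((n : ℝ) - 1) * (((n : ℝ) - 1) / (ε * (1 - ε))) + m := by
            rw [hm_def, hR₀_def]; ring
        _ = 1 / ε + m := by rw [key]
    have hεinv : 1 ≤ 1 / ε := by rw [le_div_iff₀ hε]; linarith
    have hGbig : ∀ s : ℝ, R₀ ≤ s → g s = m * s → m < G s := by
      intro s hs hgs
      have hspos : 0 < s := lt_of_lt_of_le hR₀pos hs
      have hms : 1 / ε ≤ m * s := by
        have h := mul_le_mul_of_nonneg_left hs hm_nonneg
        rw [hmR₀] at h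
        linarith
      have hfac : 1 - ((n : ℝ) - 1) * g s / s = ε := by
        rw [hgs]
        have e : ((n : ℝ) - 1) * (m * s) / s = ((n : ℝ) - 1) * m := by
          field_simp
        rw [e, hmn]; ring
      have hGs : G s = (1 + g s ^ 2) * ε := by
        show (1 + g s ^ 2) * (1 - ((n : ℝ) - 1) * g s / s) = (1 + g s ^ 2) * ε
        rw [hfac]
      have h1 : (1 / ε) ^ 2 ≤ (m * s) ^ 2 := by
        apply pow_le_pow_left₀ (by positivity) hms
      have e3 : ε * (1 / ε) ^ 2 = 1 / ε := by field_simp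
      have e4 : ε * (1 / ε) ^ 2 ≤ ε * (m * s) ^ 2 :=
        mul_le_mul_of_nonneg_left h1 (le_of_lt hε)
      have e5 : ε * (m * s) ^ 2 = ε * g s ^ 2 := by rw [hgs]
      have e6 : (1 + g s ^ 2) * ε = ε * g s ^ 2 + ε := by ring
      rw [hGs, e6]
      linarith
    obtain ⟨r₁, hr₁R₀, hr₁⟩ := stepA R₀ hR₀pos
    have hr₁pos : 0 < r₁ := lt_of_lt_of_le hR₀pos hr₁R₀
    refine ⟨r₁, hr₁pos, ?_⟩
    -- no downward crossing after r₁
    by_contra hcon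
    push_neg at hcon
    obtain ⟨rb, hrb1, hrb2⟩ := hcon
    set S : Set ℝ := {r : ℝ | r₁ ≤ r ∧ g r ≤ m * r} with hS_def
    have hSne : S.Nonempty := ⟨rb, hrb1, hrb2⟩
    have hSbdd : BddBelow S := ⟨r₁, fun x hx => hx.1⟩
    set s : ℝ := sInf S with hs_def
    have hsge : r₁ ≤ s := le_csInf hSne (fun x hx => hx.1)
    have hspos : 0 < s := lt_of_lt_of_le hr₁pos hsge
    have hscl : s ∈ closure S := csInf_mem_closure hSne hSbdd
    have hψcont : ContinuousAt (fun r => g r - m * r) s :=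
      ((hgd s hspos).continuousAt).sub ((continuous_const.mul continuous_id).continuousAt)
    -- g s ≤ m s by continuity and s ∈ closure S
    have hs_le : g s ≤ m * s := by
      have hne : (nhdsWithin s S).NeBot := mem_closure_iff_nhdsWithin_neBot.1 hscl
      have ht : Tendsto (fun r => g r - m * r) (nhdsWithin s S) (nhds (g s - m * s)) :=
        hψcont.continuousWithinAt.tendsto
      have hev : ∀ᶠ r in nhdsWithin s S, g r - m * r ≤ 0 := by
        filter_upwards [self_mem_nhdsWithin] with r hr
        have := hr.2; linarith
      have := le_of_tendsto ht hev
      linarith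
    -- points in [r₁, s) are above the line
    have habove : ∀ t : ℝ, r₁ ≤ t → t < s → m * t < g t := by
      intro t ht1 hts
      by_contra h
      push_neg at h
      have hmem : t ∈ S := ⟨ht1, h⟩
      have := csInf_le hSbdd hmem
      linarith
    have hsgt : r₁ < s := by
      rcases eq_or_lt_of_le hsge with h | h
      · exfalso; rw [← h] at hs_le; linarith
      · exact h
    -- g s ≥ m s by left continuity
    have hs_ge : m * s ≤ g s := by
      have ht : Tendsto (fun r => g r - m * r) (nhdsWithin s (Set.Iio s))
          (nhds (g s - m * s)) := hψcont.continuousWithinAt.tendsto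
      have hev : ∀ᶠ r in nhdsWithin s (Set.Iio s), 0 ≤ g r - m * r := by
        filter_upwards [Ioo_mem_nhdsLT_of_mem (Set.mem_Ioc.2 ⟨hsgt, le_refl s⟩)] with r hr
        have := habove r (le_of_lt hr.1) hr.2; linarith
      have := ge_of_tendsto ht hev
      linarith
    have hs_eq : g s = m * s := le_antisymm hs_le hs_ge
    -- derivative of ψ at s is positive, contradiction from the left
    have hψd : HasDerivAt (fun r => g r - m * r) (G s - m) s := by
      exact ((hgd s hspos).sub ((hasDerivAt_id s).const_mul m)).congr_deriv (by ring)
    have hGm : m < G s := hGbig s (hr₁R₀.trans hsge) hs_eq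
    have hslope := hasDerivAt_iff_tendsto_slope.1 hψd
    have hpos : ∀ᶠ t in nhdsWithin s {s}ᶜ, 0 < slope (fun r => g r - m * r) s t :=
      hslope.eventually (eventually_gt_nhds (by linarith))
    have hle : nhdsWithin s (Set.Iio s) ≤ nhdsWithin s {s}ᶜ :=
      nhdsWithin_mono s (fun t ht => ne_of_lt ht)
    have hmem : Set.Ioo r₁ s ∈ nhdsWithin s (Set.Iio s) :=
      Ioo_mem_nhdsLT_of_mem (Set.mem_Ioc.2 ⟨hsgt, le_refl s⟩)
    have hpos' : ∀ᶠ t in nhdsWithin s (Set.Iio s),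
        0 < slope (fun r => g r - m * r) s t := hle hpos
    have hmem' : ∀ᶠ t in nhdsWithin s (Set.Iio s), t ∈ Set.Ioo r₁ s :=
      eventually_of_mem hmem (fun t ht => ht)
    obtain ⟨t, htslope, ht⟩ := (hpos'.and hmem').exists
    simp only [slope_def_field] at htslope
    have hψt_pos : 0 < g t - m * t := by
      have := habove t (le_of_lt ht.1) ht.2; linarith
    have hts_neg : t - s < 0 := by linarith [ht.2]
    have hneg : ((g t - m * t) - (g s - m * s)) / (t - s) < 0 := by
      apply div_neg_of_pos_of_neg
      · rw [hs_eq]; linarith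
      · exact hts_neg
    linarith
  -- reduce general ε to ε' = min ε (1/2)
  intro ε hε
  set ε' : ℝ := min ε (1/2) with hε'_def
  have hε'pos : 0 < ε' := lt_min hε (by norm_num)
  have hε'1 : ε' < 1 := lt_of_le_of_lt (min_le_right _ _) (by norm_num)
  have hε'le : ε' ≤ ε := min_le_left _ _
  obtain ⟨r₀, hr₀pos, hr₀⟩ := main ε' hε'pos hε'1
  refine ⟨r₀, hr₀pos, fun r hr => ?_⟩
  have hrpos : 0 < r := lt_of_lt_of_le hr₀pos hr
  have h1 := hr₀ r hr
  have h2 : ((1 - ε') / ((n : ℝ) - 1)) * r - (1 - ε) * r / ((n : ℝ) - 1)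
      = (ε - ε') * r / ((n : ℝ) - 1) := by ring
  have h3 : 0 ≤ (ε - ε') * r / ((n : ℝ) - 1) :=
    div_nonneg (mul_nonneg (by linarith) (le_of_lt hrpos)) (le_of_lt hn1')
  linarith
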